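/- Let L/K be a finite Galois extension with Galois group G and let σ ∈ G have even multiplicative order 2r. Then there exists a nonzero b ∈ L such that for every nonzero c ∈ L, σ(b)b⁻¹ ≠ σ²(c)c⁻¹. -/

import Mathlib

variable {K L : Type*} [Field K] [Field L] [Algebra K L]

private lemma sum_range_two_mul' {M : Type*} [AddCommMonoid M] (n : ℕ) (f : ℕ → M) :
    ∑ i ∈ Finset.range (2 * n), f i = ∑ i ∈ Finset.range n, (f (2 * i) + f (2 * i + 1)) := by
  induction n with
  | zero => simp
  | succ n ih =>
      have h2 : 2 * (n + 1) = (2 * n + 1) + 1 := by ring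
      rw [h2, Finset.sum_range_succ, Finset.sum_range_succ, ih, Finset.sum_range_succ,
        add_assoc]

/-- if `σ` has even order `2r`, then there is a nonzero `b ∈ L` with
`σ(b)b⁻¹ ≠ σ²(c)c⁻¹` for every nonzero `c ∈ L`. -/
theorem statement4 [FiniteDimensional K L] [IsGalois K L]
    (σ : L ≃ₐ[K] L) (r : ℕ) (hr : 1 ≤ r) (hord : orderOf σ = 2 * r) :
    ∃ b : L, b ≠ 0 ∧ ∀ c : L, c ≠ 0 → σ b * b⁻¹ ≠ (σ ^ 2) c * c⁻¹ := by
  by_contra hcon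
  push_neg at hcon
  have h : ∀ b : L, b ≠ 0 → ∃ c : L, c ≠ 0 ∧ σ b * b⁻¹ = (σ ^ 2) c * c⁻¹ := by
    intro b hb
    obtain ⟨c, hc, heq⟩ := hcon b hb
    exact ⟨c, hc, heq⟩
  have hσ2r : σ ^ (2 * r) = 1 := by rw [← hord]; exact pow_orderOf_eq_one σ
  rcases finite_or_infinite K with hK | hK
  -- Case 1 : K finite, hence L finite
  · haveI : Finite L := Module.finite_of_finite K
    -- group homomorphisms b ↦ σ(b)/b and c ↦ σ²(c)/c on Lˣ
    set f : Lˣ →* Lˣ := Units.map (σ : L →* L) / MonoidHom.id Lˣ with hf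
    set g : Lˣ →* Lˣ := Units.map ((σ ^ 2 : L ≃ₐ[K] L) : L →* L) / MonoidHom.id Lˣ with hg
    have hfval : ∀ u : Lˣ, (f u : L) = σ u * (u : L)⁻¹ := by
      intro u
      simp [hf, div_eq_mul_inv]
    have hgval : ∀ u : Lˣ, (g u : L) = (σ ^ 2) u * (u : L)⁻¹ := by
      intro u
      simp [hg, div_eq_mul_inv]
    -- range f ≤ range g
    have hrange : f.range ≤ g.range := by
      rintro x ⟨u, rfl⟩
      obtain ⟨c, hc, heq⟩ := h u u.ne_zero
      refine ⟨Units.mk0 c hc, ?_⟩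
      apply Units.ext
      rw [hgval, hfval]
      simpa using heq.symm
    -- ker f ≤ ker g
    have hker : f.ker ≤ g.ker := by
      intro u hu
      rw [MonoidHom.mem_ker] at hu ⊢
      apply Units.ext
      have h1 : σ (u : L) = u := by
        have := congrArg (fun w : Lˣ => (w : L) * (u : L)) hu
        simpa [hfval, mul_assoc, inv_mul_cancel₀ u.ne_zero] using this
      have : ((σ ^ 2) (u : L)) = u := by
        rw [pow_two, AlgEquiv.mul_apply, h1, h1]
      rw [hgval, this]
      simp [inv_mul_cancel₀ u.ne_zero, mul_inv_cancel₀ u.ne_zero]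
    -- cardinalities
    have hcardf : Nat.card f.range * Nat.card f.ker = Nat.card Lˣ := by
      rw [Subgroup.card_eq_card_quotient_mul_card_subgroup f.ker]
      congr 1
      exact (Nat.card_congr (QuotientGroup.quotientKerEquivRange f).toEquiv).symm
    have hcardg : Nat.card g.range * Nat.card g.ker = Nat.card Lˣ := by
      rw [Subgroup.card_eq_card_quotient_mul_card_subgroup g.ker]
      congr 1
      exact (Nat.card_congr (QuotientGroup.quotientKerEquivRange g).toEquiv).symm
    have hle : Nat.card f.range ≤ Nat.card g.range := Subgroup.card_le_of_le hrange
    have hgpos : 0 < Nat.card g.range := Nat.card_pos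
    have hkerle : Nat.card g.ker ≤ Nat.card f.ker := by
      have : Nat.card g.range * Nat.card g.ker ≤ Nat.card g.range * Nat.card f.ker := by
        rw [hcardg, ← hcardf]
        exact Nat.mul_le_mul_right _ hle
      exact Nat.le_of_mul_le_mul_left this hgpos
    have hkereq : f.ker = g.ker := by
      have h1 : (f.ker : Set Lˣ) ⊆ (g.ker : Set Lˣ) := hker
      have h2 : (g.ker : Set Lˣ).Finite := Set.toFinite _
      have h3 : (g.ker : Set Lˣ).ncard ≤ (f.ker : Set Lˣ).ncard := by
        rw [← Nat.card_coe_set_eq, ← Nat.card_coe_set_eq]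
        exact hkerle
      exact SetLike.coe_injective (Set.eq_of_subset_of_ncard_le h1 h3 (Set.toFinite _))
    -- fixed points of σ² are fixed points of σ
    have hfix : ∀ x : L, (σ ^ 2) x = x → σ x = x := by
      intro x hx
      by_cases hx0 : x = 0
      · simp [hx0]
      · have hu : Units.mk0 x hx0 ∈ g.ker := by
          rw [MonoidHom.mem_ker]
          apply Units.ext
          rw [hgval]
          simp [hx, mul_inv_cancel₀ hx0]
        rw [← hkereq, MonoidHom.mem_ker] at hu
        have := congrArg (fun w : Lˣ => (w : L) * x) hu
        simpa [hfval, mul_assoc, inv_mul_cancel₀ hx0] using this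
    -- Galois correspondence : σ ∈ zpowers σ²
    have hmem : σ ∈ Subgroup.zpowers (σ ^ 2) := by
      rw [← IntermediateField.fixingSubgroup_fixedField (Subgroup.zpowers (σ ^ 2))]
      intro y
      rcases y with ⟨y, hy⟩
      have hy2 : (σ ^ 2) y = y := hy ⟨σ ^ 2, Subgroup.mem_zpowers _⟩
      exact hfix y hy2
    obtain ⟨k, hk⟩ := Subgroup.mem_zpowers_iff.mp hmem
    have hz : σ ^ (2 * k - 1) = 1 := by
      have h2c : σ ^ ((2 : ℤ)) = σ ^ (2 : ℕ) := by norm_cast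
      have h2k : σ ^ ((2 : ℤ) * k) = σ := by rw [zpow_mul, h2c, hk]
      rw [zpow_sub, h2k, zpow_one, mul_inv_cancel]
    have hdvd : ((orderOf σ : ℤ)) ∣ (2 * k - 1) := orderOf_dvd_iff_zpow_eq_one.mpr hz
    rw [hord] at hdvd
    obtain ⟨m, hm⟩ := hdvd
    have hm' : 2 * k - 1 = 2 * ((r : ℤ) * m) := by push_cast at hm ⊢; linarith
    omega
  -- Case 2 : K infinite
  · set P : L → L := fun b => ∏ i ∈ Finset.range r, (σ ^ (2 * i)) b with hP
    have hPσ : ∀ b : L, σ (P b) = P (σ b) := by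
      intro b
      rw [hP]
      simp only [map_prod]
      refine Finset.prod_congr rfl fun i _ => ?_
      rw [← AlgEquiv.mul_apply, ← AlgEquiv.mul_apply, ← pow_succ, ← pow_succ']
    have hPmul : ∀ x y : L, P (x * y) = P x * P y := by
      intro x y
      simp [hP, map_mul, Finset.prod_mul_distrib]
    have hPinv : ∀ x : L, P x⁻¹ = (P x)⁻¹ := by
      intro x
      simp only [hP, map_inv₀, Finset.prod_inv_distrib]
    have hPne : ∀ x : L, x ≠ 0 → P x ≠ 0 := by
      intro x hx
      rw [hP]
      exact Finset.prod_ne_zero_iff.mpr fun i _ =>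
        fun h0 => hx ((map_eq_zero_iff _ (σ ^ (2 * i)).injective).mp h0)
    -- telescoping : P(σ² c) = P c for c ≠ 0
    have htel : ∀ c : L, c ≠ 0 → P ((σ ^ 2) c) = P c := by
      intro c hc
      have e1 : P ((σ ^ 2) c) = ∏ i ∈ Finset.range r, (σ ^ (2 * (i + 1))) c := by
        rw [hP]
        refine Finset.prod_congr rfl fun i _ => ?_
        rw [← AlgEquiv.mul_apply, ← pow_add]
        have h22 : 2 * i + 2 = 2 * (i + 1) := by ring
        rw [h22]
      have e2 : (∏ i ∈ Finset.range r, (σ ^ (2 * (i + 1))) c) * ((σ ^ (2 * 0)) c)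
          = (∏ i ∈ Finset.range r, (σ ^ (2 * i)) c) * ((σ ^ (2 * r)) c) := by
        rw [← Finset.prod_range_succ' (fun i => (σ ^ (2 * i)) c) r,
          ← Finset.prod_range_succ (fun i => (σ ^ (2 * i)) c) r]
      rw [e1]
      have hc0 : (σ ^ (2 * 0)) c = c := by norm_num
      have hcr : (σ ^ (2 * r)) c = c := by rw [hσ2r]; rfl
      rw [hc0, hcr] at e2
      have := mul_right_cancel₀ hc e2
      rw [this, hP]
    -- Key : σ fixes P b for every b
    have hKey : ∀ b : L, σ (P b) = P b := by
      intro b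
      by_cases hb : b = 0
      · have : P 0 = 0 := by
          rw [hP]
          exact Finset.prod_eq_zero (Finset.mem_range.mpr hr) (map_zero _)
        rw [hb, this, map_zero]
      · obtain ⟨c, hc, heq⟩ := h b hb
        have hσb : σ b = (σ ^ 2) c * c⁻¹ * b := by
          have h5 : σ b * b⁻¹ * b = (σ ^ 2) c * c⁻¹ * b := by rw [heq]
          rwa [mul_assoc, inv_mul_cancel₀ hb, mul_one] at h5
        rw [hPσ, hσb, hPmul, hPmul, hPinv, htel c hc,
          mul_inv_cancel₀ (hPne c hc), one_mul]
    -- polynomial step : sums of even and odd powers agree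
    have hsum : ∀ x : L, ∑ i ∈ Finset.range r, (σ ^ (2 * i)) x
        = ∑ i ∈ Finset.range r, (σ ^ (2 * i)) (σ x) := by
      intro x
      set A : Polynomial L := ∏ i ∈ Finset.range r, (Polynomial.X + Polynomial.C ((σ ^ (2 * i)) x)) with hA
      set B : Polynomial L := ∏ i ∈ Finset.range r, (Polynomial.X + Polynomial.C ((σ ^ (2 * i)) (σ x))) with hB
      have heval : ∀ v : ℕ → L, ∀ y : L,
          (∏ i ∈ Finset.range r, (Polynomial.X + Polynomial.C (v i))).eval y
          = ∏ i ∈ Finset.range r, (y + v i) := by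
        intro v y
        rw [Polynomial.eval_prod]
        simp
      have hABrange : ∀ t : K, A.eval (algebraMap K L t) = B.eval (algebraMap K L t) := by
        intro t
        set y := algebraMap K L t with hy
        have hPval : ∀ z : L, P (z + y) = ∏ i ∈ Finset.range r, (y + (σ ^ (2 * i)) z) := by
          intro z
          rw [hP]
          refine Finset.prod_congr rfl fun i _ => ?_
          rw [map_add, AlgEquiv.commutes, add_comm]
        have hA' : A.eval y = P (x + y) := by rw [hA, heval, ← hPval]
        have hB' : B.eval y = P (σ x + y) := by rw [hB, heval, ← hPval]
        have hσxy : σ (x + y) = σ x + y := by rw [map_add, hy, AlgEquiv.commutes]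
        rw [hA', hB', ← hσxy, ← hPσ, hKey]
      have hAB : A = B := by
        apply Polynomial.eq_of_infinite_eval_eq
        have hsub : Set.range (algebraMap K L) ⊆ {x | Polynomial.eval x A = Polynomial.eval x B} := by
          rintro z ⟨t, rfl⟩
          exact hABrange t
        exact (Set.infinite_range_of_injective (algebraMap K L).injective).mono hsub
      -- compare the coefficients of degree r - 1
      have hcoeff : ∀ v : ℕ → L,
          (∏ i ∈ Finset.range r, (Polynomial.X + Polynomial.C (v i))).coeff (r - 1)
          = ∑ i ∈ Finset.range r, v i := by
        intro v
        have h1 : (r - 1 : ℕ) ≤ (Finset.range r).card := by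
          rw [Finset.card_range]; omega
        rw [Finset.prod_X_add_C_coeff (Finset.range r) v h1]
        have h2 : (Finset.range r).card - (r - 1) = 1 := by
          rw [Finset.card_range]; omega
        rw [h2, Finset.powersetCard_one, Finset.sum_map]
        simp
      have := congrArg (fun p : Polynomial L => p.coeff (r - 1)) hAB
      simpa only [hA, hB, hcoeff] using this
    -- Dedekind's linear independence of characters gives a contradiction
    have hinj : Function.Injective
        (fun j : Fin (2 * r) => ((σ ^ (j : ℕ) : L ≃ₐ[K] L) : L →* L)) := by
      intro a b hab
      have hfun : (σ ^ (a : ℕ) : L ≃ₐ[K] L) = σ ^ (b : ℕ) := by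
        ext x
        exact DFunLike.congr_fun hab x
      have ha : (a : ℕ) ∈ Set.Iio (orderOf σ) := by rw [hord]; exact a.isLt
      have hb : (b : ℕ) ∈ Set.Iio (orderOf σ) := by rw [hord]; exact b.isLt
      exact Fin.ext (pow_injOn_Iio_orderOf ha hb hfun)
    have hLI := (linearIndependent_monoidHom L L).comp
      (fun j : Fin (2 * r) => ((σ ^ (j : ℕ) : L ≃ₐ[K] L) : L →* L)) hinj
    rw [Fintype.linearIndependent_iff] at hLI
    set gcoef : Fin (2 * r) → L := fun j => if Even (j : ℕ) then 1 else -1 with hgcoef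
    have hzero : ∑ j : Fin (2 * r), gcoef j •
        (((σ ^ (j : ℕ) : L ≃ₐ[K] L) : L →* L) : L → L) = 0 := by
      funext x
      rw [Finset.sum_apply]
      have : ∀ j : Fin (2 * r), (gcoef j •
          (((σ ^ (j : ℕ) : L ≃ₐ[K] L) : L →* L) : L → L)) x
          = (if Even (j : ℕ) then (1 : L) else -1) * (σ ^ (j : ℕ)) x := by
        intro j
        simp [hgcoef]
      rw [Finset.sum_congr rfl fun j _ => this j]
      have hrw := Fin.sum_univ_eq_sum_range
        (fun j => (if Even j then (1 : L) else -1) * (σ ^ j) x) (2 * r)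
      rw [hrw, sum_range_two_mul' r]
      have hterm : ∀ i : ℕ,
          (if Even (2 * i) then (1 : L) else -1) * (σ ^ (2 * i)) x
          + (if Even (2 * i + 1) then (1 : L) else -1) * (σ ^ (2 * i + 1)) x
          = (σ ^ (2 * i)) x - (σ ^ (2 * i)) (σ x) := by
        intro i
        have h1 : Even (2 * i) := even_two_mul i
        have h2 : ¬ Even (2 * i + 1) := by simp [Nat.even_add_one, h1]
        rw [if_pos h1, if_neg h2, one_mul, neg_one_mul, ← AlgEquiv.mul_apply, ← pow_succ]
        ring_nf
      rw [Finset.sum_congr rfl fun i _ => hterm i, Finset.sum_sub_distrib,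
        ← hsum x, sub_self]
      rfl
    have := hLI gcoef hzero ⟨0, by omega⟩
    rw [hgcoef] at this
    simp at this
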